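/- Let 1 ≤ p < q ≤ ∞. There exists a positive constant c, depending only on p and q, such that for all m, n ∈ ℕ with log₂ m ≤ n ≤ m, the identity embedding id : ℓ_p^m → ℓ_q^m satisfies e_n(id) ≥ c·(log₂(m/n + 1)/n)^{1/p − 1/q} (with the convention 1/∞ = 0). -/

import Mathlib

open Metric Set
open scoped ENNReal

/-- The `n`-th (dyadic) entropy number of a bounded linear operator `T : X → Y`:
the infimum of all `ε > 0` such that the image of the closed unit ball of `X`
can be covered by `2 ^ (n - 1)` closed balls of radius `ε` in `Y`. -/
noncomputable def entropyNum {X Y : Type*} [NormedAddCommGroup X] [NormedSpace ℝ X]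
    [NormedAddCommGroup Y] [NormedSpace ℝ Y] (n : ℕ) (T : X →L[ℝ] Y) : ℝ :=
  sInf {ε : ℝ | 0 < ε ∧ ∃ S : Finset Y, S.card ≤ 2 ^ (n - 1) ∧
    T '' closedBall 0 1 ⊆ ⋃ y ∈ S, closedBall y ε}

/-- The `n`-th (dyadic) inner entropy number of a bounded linear operator `T : X → Y`:
the supremum of all `ε > 0` such that there are `2 ^ (n - 1) + 1` points in the closed
unit ball of `X` whose images under `T` are pairwise at distance at least `2 * ε`. -/
noncomputable def innerEntropyNum {X Y : Type*} [NormedAddCommGroup X] [NormedSpace ℝ X]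
    [NormedAddCommGroup Y] [NormedSpace ℝ Y] (n : ℕ) (T : X →L[ℝ] Y) : ℝ :=
  sSup {ε : ℝ | 0 < ε ∧ ∃ x : Fin (2 ^ (n - 1) + 1) → X, (∀ i, ‖x i‖ ≤ 1) ∧
    ∀ i j, i ≠ j → 2 * ε ≤ ‖T (x i) - T (x j)‖}

lemma sl_choose_step {m k w : ℕ} (h : 2^w * (k+1) ≤ m - k) :
    2^w * m.choose k ≤ m.choose (k+1) := by
  have he : m.choose (k+1) * (k+1) = m.choose k * (m - k) := Nat.choose_succ_right_eq m k
  have h2 : (2^w * m.choose k) * (k+1) ≤ m.choose (k+1) * (k+1) := by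
    calc (2^w * m.choose k) * (k+1) = m.choose k * (2^w * (k+1)) := by ring
    _ ≤ m.choose k * (m - k) := Nat.mul_le_mul_left _ h
    _ = m.choose (k+1) * (k+1) := he.symm
  exact Nat.le_of_mul_le_mul_right h2 k.succ_pos

/-- binomial coefficients are monotone on the lower half -/
lemma sl_choose_mono_half (m : ℕ) : ∀ {i j : ℕ}, i ≤ j → 2*j ≤ m → m.choose i ≤ m.choose j := by
  intro i j hij hjm
  induction j with
  | zero => simp_all
  | succ j IH =>
    by_cases h : i = j + 1
    · subst h; exact le_rfl
    · have h1 : m.choose i ≤ m.choose j := IH (by omega) (by omega)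
      refine h1.trans ?_
      have := sl_choose_step (m := m) (k := j) (w := 0) (by omega)
      simpa using this

lemma sl_choose_ratio (m w : ℕ) : ∀ {h k : ℕ}, h ≤ k →
    (∀ i, h ≤ i → i < k → 2^w * (i+1) ≤ m - i) →
    2^(w*(k-h)) * m.choose h ≤ m.choose k := by
  intro h k
  induction k with
  | zero => intro hk _; interval_cases h; simp
  | succ k IH =>
    intro hk hstep
    by_cases heq : h = k + 1
    · subst heq; simp
    · have hk' : h ≤ k := by omega
      have h1 := IH hk' (fun i hi hik => hstep i hi (by omega))
      have h2 : 2^w * m.choose k ≤ m.choose (k+1) := sl_choose_step (hstep k hk' (by omega))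
      have hexp : w*(k+1-h) = w + w*(k-h) := by
        have h3 : k+1-h = (k-h)+1 := by omega
        rw [h3, Nat.mul_succ]; ring
      calc 2^(w*(k+1-h)) * m.choose h = 2^w * (2^(w*(k-h)) * m.choose h) := by
            rw [← mul_assoc, ← pow_add, hexp]
      _ ≤ 2^w * m.choose k := Nat.mul_le_mul_left _ h1
      _ ≤ m.choose (k+1) := h2

lemma sl_encode_card {m R : ℕ} (hm : 1 ≤ m) (s : Finset (Fin m → Fin 17)) (v₀ : Fin m → Fin 17)
    (hs : ∀ v ∈ s, (∑ i, (((v i : ℕ) : ℤ) - ((v₀ i : ℕ) : ℤ)).natAbs) ≤ R) :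
    s.card ≤ 2^m * 2^(m+R) := by
  classical
  set a : (Fin m → Fin 17) → Fin m → ℕ :=
    fun v i => (((v i : ℕ) : ℤ) - ((v₀ i : ℕ) : ℤ)).natAbs with ha
  have hg_lt : ∀ v i, min ((∑ j ∈ Finset.Iic i, a v j) + (i : ℕ)) (m+R-1) < m + R := by
    intro v i
    exact lt_of_le_of_lt (min_le_right _ _) (by omega)
  set g : (Fin m → Fin 17) → Fin m → Fin (m+R) :=
    fun v i => ⟨min ((∑ j ∈ Finset.Iic i, a v j) + (i : ℕ)) (m+R-1), hg_lt v i⟩ with hgdef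
  -- on s, the min collapses
  have hcollapse : ∀ v ∈ s, ∀ i : Fin m,
      (g v i : ℕ) = (∑ j ∈ Finset.Iic i, a v j) + (i : ℕ) := by
    intro v hv i
    have h1 : (∑ j ∈ Finset.Iic i, a v j) ≤ R :=
      le_trans (Finset.sum_le_sum_of_subset (Finset.subset_univ _)) (hs v hv)
    have h2 : (i : ℕ) ≤ m - 1 := by omega
    simp only [hgdef]
    exact min_eq_left (by omega)
  have hmono : ∀ v ∈ s, StrictMono (g v) := by
    intro v hv i i' hii
    have e1 := hcollapse v hv i
    have e2 := hcollapse v hv i'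
    have hsub : (∑ j ∈ Finset.Iic i, a v j) ≤ ∑ j ∈ Finset.Iic i', a v j :=
      Finset.sum_le_sum_of_subset (Finset.Iic_subset_Iic.mpr hii.le)
    have : (g v i : ℕ) < (g v i' : ℕ) := by
      rw [e1, e2]; have : (i : ℕ) < (i' : ℕ) := hii; omega
    exact this
  set enc : (Fin m → Fin 17) → (Fin m → Bool) × Finset (Fin (m+R)) :=
    fun v => (fun i => decide (((v i : ℕ) : ℤ) < ((v₀ i : ℕ) : ℤ)),
      Finset.image (g v) Finset.univ) with hencdef
  have hinj : Set.InjOn enc s := by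
    intro v hv w hw henc
    have hsign : ∀ i, (((v i : ℕ) : ℤ) < ((v₀ i : ℕ) : ℤ)) ↔ (((w i : ℕ) : ℤ) < ((v₀ i : ℕ) : ℤ)) := by
      intro i
      have := congrFun (congrArg Prod.fst henc) i
      simpa using decide_eq_decide.mp this
    have himg : Finset.image (g v) Finset.univ = Finset.image (g w) Finset.univ :=
      congrArg Prod.snd henc
    -- the two strictly monotone enumerations agree
    have hcardv : (Finset.image (g v) Finset.univ).card = m := by
      rw [Finset.card_image_of_injective _ (hmono v hv).injective, Finset.card_univ,
        Fintype.card_fin]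
    have hgv := Finset.orderEmbOfFin_unique hcardv
      (f := g v) (fun x => Finset.mem_image_of_mem _ (Finset.mem_univ x)) (hmono v hv)
    have hcardw : (Finset.image (g v) Finset.univ).card = m := hcardv
    have hgw := Finset.orderEmbOfFin_unique hcardv
      (f := g w) (fun x => himg ▸ Finset.mem_image_of_mem _ (Finset.mem_univ x)) (hmono w hw)
    have hgeq : g v = g w := hgv.trans hgw.symm
    -- partial sums agree
    have hpsum : ∀ i : Fin m, (∑ j ∈ Finset.Iic i, a v j) = ∑ j ∈ Finset.Iic i, a w j := by
      intro i
      have hgi : ((g v i : Fin (m+R)) : ℕ) = ((g w i : Fin (m+R)) : ℕ) := by rw [hgeq]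
      rw [hcollapse v hv i, hcollapse w hw i] at hgi
      omega
    -- recover a by strong induction on the index
    have hab : ∀ t : ℕ, ∀ i : Fin m, (i : ℕ) = t → a v i = a w i := by
      intro t
      induction t using Nat.strong_induction_on with
      | _ t IH =>
        intro i hit
        have hIic : Finset.Iic i = insert i (Finset.Iio i) := (Finset.Iio_insert i).symm
        have h1 := hpsum i
        rw [hIic, Finset.sum_insert (by simp), Finset.sum_insert (by simp)] at h1
        have h2 : (∑ j ∈ Finset.Iio i, a v j) = ∑ j ∈ Finset.Iio i, a w j := by
          refine Finset.sum_congr rfl ?_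
          intro j hj
          have hji : j < i := by simpa using hj
          exact IH (j : ℕ) (by omega) j rfl
        omega
    -- conclude v = w
    funext i
    have h1 : a v i = a w i := hab (i : ℕ) i rfl
    have h2 := hsign i
    simp only [ha] at h1
    have : ((v i : ℕ) : ℤ) = ((w i : ℕ) : ℤ) := by omega
    exact Fin.ext (by exact_mod_cast this)
  have hcard := Finset.card_le_card_of_injOn enc (fun v _ => Finset.mem_univ (enc v)) hinj
  calc s.card ≤ (Finset.univ : Finset ((Fin m → Bool) × Finset (Fin (m+R)))).card := hcard
  _ = 2^m * 2^(m+R) := by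
      rw [Finset.card_univ, Fintype.card_prod, Fintype.card_finset, Fintype.card_fin]
      simp [Fintype.card_fun]

lemma sl_sum_natAbs_lt {m : ℕ} {r δ ε : ℝ} (hm : 1 ≤ m) (hδ : 0 < δ) (hr1 : 1 ≤ r)
    (hε : 0 ≤ ε) (f : Fin m → ℕ)
    (hsum : ∑ i, (δ * (f i : ℝ)) ^ r ≤ (2*ε) ^ r) (hεb : 2*ε < (m:ℝ)^(1/r) * δ) :
    ∑ i, f i ≤ m - 1 := by
  have hr0 : (0:ℝ) < r := lt_of_lt_of_le one_pos hr1
  have hmR : (0:ℝ) < (m:ℝ) := by exact_mod_cast hm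
  have h2εm : (2*ε) ^ r < (m:ℝ) * δ ^ r := by
    calc (2*ε) ^ r < ((m:ℝ) ^ (1/r) * δ) ^ r := Real.rpow_lt_rpow (by positivity) hεb hr0
    _ = (m:ℝ) * δ ^ r := by
        rw [Real.mul_rpow (by positivity) hδ.le, one_div, Real.rpow_inv_rpow hmR.le hr0.ne']
  have hterm : ∀ i : Fin m, δ ^ r * ((f i : ℕ) : ℝ) ≤ (δ * (f i : ℝ)) ^ r := by
    intro i
    rw [Real.mul_rpow hδ.le (by positivity)]
    have hδr : (0:ℝ) < δ ^ r := Real.rpow_pos_of_pos hδ _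
    rcases Nat.eq_zero_or_pos (f i) with h0 | h1
    · rw [h0]; simp [Real.zero_rpow hr0.ne']
    · have h1t : (1:ℝ) ≤ ((f i : ℕ) : ℝ) := Nat.one_le_cast.mpr h1
      have htt : ((f i : ℕ) : ℝ) ≤ ((f i : ℕ) : ℝ) ^ r := by
        calc ((f i : ℕ) : ℝ) = ((f i : ℕ) : ℝ) ^ (1:ℝ) := (Real.rpow_one _).symm
        _ ≤ ((f i : ℕ) : ℝ) ^ r := Real.rpow_le_rpow_of_exponent_le h1t hr1
      nlinarith
  have hδr : (0:ℝ) < δ ^ r := Real.rpow_pos_of_pos hδ _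
  have hfinal : δ ^ r * (∑ i, ((f i : ℕ) : ℝ)) < (m:ℝ) * δ ^ r := by
    calc δ ^ r * (∑ i, ((f i : ℕ) : ℝ)) = ∑ i, δ ^ r * ((f i : ℕ) : ℝ) := Finset.mul_sum _ _ _
    _ ≤ ∑ i, (δ * (f i : ℝ)) ^ r := Finset.sum_le_sum (fun i _ => hterm i)
    _ ≤ (2*ε) ^ r := hsum
    _ < (m:ℝ) * δ ^ r := h2εm
  have hsumlt : (∑ i, ((f i : ℕ) : ℝ)) < (m:ℝ) := by nlinarith
  have h1 : ((∑ i, f i : ℕ) : ℝ) < (m:ℝ) := by push_cast; exact hsumlt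
  have h2 : (∑ i, f i) < m := by exact_mod_cast h1
  omega

lemma sl_dense (p q : ℝ≥0∞) [Fact (1 ≤ p)] [Fact (1 ≤ q)] (hpq : p < q) {m nn : ℕ}
    (hm : 1 ≤ m) (hnm : nn ≤ m)
    (T : PiLp p (fun _ : Fin m => ℝ) →L[ℝ] PiLp q (fun _ : Fin m => ℝ))
    (hT : ∀ x i, T x i = x i) {ε : ℝ} (hε : 0 < ε)
    (S : Finset (PiLp q fun _ : Fin m => ℝ)) (hS : S.card ≤ 2^(nn-1))
    (hcov : T '' closedBall 0 1 ⊆ ⋃ y ∈ S, closedBall y ε) :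
    (1/16) * (m : ℝ) ^ (1/q.toReal - 1/p.toReal) ≤ ε := by
  classical
  by_contra hlt
  push_neg at hlt
  have hp_top : p ≠ ∞ := hpq.ne_top
  have hp1 : (1:ℝ) ≤ p.toReal := by
    rw [← ENNReal.toReal_one]; exact ENNReal.toReal_mono hp_top (Fact.out : 1 ≤ p)
  have hp0 : (0:ℝ) < p.toReal := lt_of_lt_of_le one_pos hp1
  have hmR : (0:ℝ) < (m:ℝ) := by exact_mod_cast hm
  set p' : ℝ := p.toReal with hp'
  set δ : ℝ := (m:ℝ) ^ (-(1/p')) / 8 with hδdef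
  have hδ : 0 < δ := by positivity
  set xv : (Fin m → Fin 17) → PiLp p (fun _ : Fin m => ℝ) :=
    fun v => (WithLp.equiv p _).symm (fun i => δ * (((v i : ℕ) : ℝ) - 8)) with hxvdef
  have hxv_apply : ∀ v i, xv v i = δ * (((v i : ℕ) : ℝ) - 8) := by
    intro v i; rfl
  -- norm bound
  have hxnorm : ∀ v, ‖xv v‖ ≤ 1 := by
    intro v
    rw [PiLp.norm_eq_sum hp0]
    have hterm : ∀ i : Fin m, ‖xv v i‖ ^ p' ≤ (m:ℝ)⁻¹ := by
      intro i
      have h16 : ((v i : ℕ) : ℝ) ≤ 16 := by exact_mod_cast (by omega : (v i : ℕ) ≤ 16)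
      have h00 : (0:ℝ) ≤ ((v i : ℕ) : ℝ) := Nat.cast_nonneg _
      have h8 : |((v i : ℕ) : ℝ) - 8| ≤ 8 := abs_le.mpr ⟨by linarith, by linarith⟩
      have habs : ‖xv v i‖ ≤ (m:ℝ) ^ (-(1/p')) := by
        rw [hxv_apply, Real.norm_eq_abs, abs_mul, abs_of_pos hδ]
        calc δ * |((v i : ℕ) : ℝ) - 8| ≤ δ * 8 := by nlinarith
        _ = (m:ℝ) ^ (-(1/p')) := by rw [hδdef]; ring
      calc ‖xv v i‖ ^ p' ≤ ((m:ℝ) ^ (-(1/p'))) ^ p' :=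
            Real.rpow_le_rpow (norm_nonneg _) habs hp0.le
      _ = (m:ℝ) ^ ((-(1/p')) * p') := (Real.rpow_mul hmR.le _ _).symm
      _ = (m:ℝ)⁻¹ := by
          rw [show (-(1/p')) * p' = -1 by field_simp, Real.rpow_neg_one]
    have hsum : (∑ i, ‖xv v i‖ ^ p') ≤ 1 := by
      calc (∑ i, ‖xv v i‖ ^ p') ≤ ∑ _i : Fin m, (m:ℝ)⁻¹ := Finset.sum_le_sum (fun i _ => hterm i)
      _ = 1 := by rw [Finset.sum_const, Finset.card_univ, Fintype.card_fin, nsmul_eq_mul,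
            mul_inv_cancel₀ hmR.ne']
    exact Real.rpow_le_one (by positivity) hsum (by positivity)
  -- coordinates of differences of images
  have hdabs : ∀ v w : Fin m → Fin 17, ∀ i,
      ‖(T (xv v) - T (xv w)) i‖ = δ * (((((v i : ℕ) : ℤ) - ((w i : ℕ) : ℤ)).natAbs : ℕ) : ℝ) := by
    intro v w i
    have h1 : (T (xv v) - T (xv w)) i = T (xv v) i - T (xv w) i := rfl
    have h2 : (T (xv v) - T (xv w)) i = δ * (((v i : ℕ) : ℝ) - ((w i : ℕ) : ℝ)) := by
      rw [h1, hT, hT, hxv_apply, hxv_apply]; ring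
    rw [h2, Real.norm_eq_abs, abs_mul, abs_of_pos hδ]
    congr 1
    rw [Nat.cast_natAbs, Int.cast_abs]
    push_cast
    ring_nf
  -- the key claim
  have hclaim : ∀ v w : Fin m → Fin 17, dist (T (xv v)) (T (xv w)) ≤ 2*ε →
      (∑ i, (((v i : ℕ) : ℤ) - ((w i : ℕ) : ℤ)).natAbs) ≤ m - 1 := by
    intro v w hd
    rw [dist_eq_norm] at hd
    by_cases hq_top : q = ∞
    · -- sup norm case
      have h2εδ : 2*ε < δ := by
        have hx : ε < (1/16) * (m:ℝ) ^ (-(1/p')) := by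
          have h0 : 1/q.toReal = 0 := by rw [hq_top]; simp
          calc ε < (1/16) * (m : ℝ) ^ (1/q.toReal - 1/p') := hlt
          _ = (1/16) * (m:ℝ) ^ (-(1/p')) := by rw [h0]; ring_nf
        rw [hδdef]; nlinarith [Real.rpow_pos_of_pos hmR (-(1/p'))]
      have hzero : ∀ i : Fin m, (((v i : ℕ) : ℤ) - ((w i : ℕ) : ℤ)).natAbs = 0 := by
        intro i
        by_contra hne
        have h1 : (1:ℝ) ≤ ((((v i : ℕ) : ℤ) - ((w i : ℕ) : ℤ)).natAbs : ℝ) :=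
          Nat.one_le_cast.mpr (by omega)
        have hcoord_le : ‖(T (xv v) - T (xv w)) i‖ ≤ ‖T (xv v) - T (xv w)‖ := by
          subst hq_top
          rw [PiLp.norm_eq_ciSup]
          exact le_ciSup (f := fun j => ‖(T (xv v) - T (xv w)) j‖) (Finite.bddAbove_range _) i
        rw [hdabs] at hcoord_le
        nlinarith
      simp [hzero]
    · -- q < ∞
      have hq1 : (1:ℝ) ≤ q.toReal := by
        rw [← ENNReal.toReal_one]; exact ENNReal.toReal_mono hq_top (Fact.out : 1 ≤ q)
      have hq0 : (0:ℝ) < q.toReal := lt_of_lt_of_le one_pos hq1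
      set r : ℝ := q.toReal with hr'
      have hnorm_eq : ‖T (xv v) - T (xv w)‖ = (∑ i, ‖(T (xv v) - T (xv w)) i‖ ^ r) ^ (1/r) :=
        PiLp.norm_eq_sum hq0 _
      have hsum_le : (∑ i, (δ * ((((((v i : ℕ) : ℤ) - ((w i : ℕ) : ℤ)).natAbs : ℕ) : ℝ)) ) ^ r) ≤ (2*ε) ^ r := by
        have h1 : ((∑ i, ‖(T (xv v) - T (xv w)) i‖ ^ r) ^ (1/r)) ^ r ≤ (2*ε) ^ r :=
          Real.rpow_le_rpow (by positivity) (hnorm_eq ▸ hd) hq0.le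
        rw [one_div, Real.rpow_inv_rpow (by positivity) hq0.ne'] at h1
        calc (∑ i, (δ * ((((((v i : ℕ) : ℤ) - ((w i : ℕ) : ℤ)).natAbs : ℕ) : ℝ))) ^ r)
            = ∑ i, ‖(T (xv v) - T (xv w)) i‖ ^ r :=
              Finset.sum_congr rfl (fun i _ => by rw [hdabs])
        _ ≤ (2*ε) ^ r := h1
      have hεb : 2*ε < (m:ℝ) ^ (1/r) * δ := by
        have hx : ε < (1/16) * ((m:ℝ) ^ (1/r) * (m:ℝ) ^ (-(1/p'))) := by
          calc ε < (1/16) * (m : ℝ) ^ (1/r - 1/p') := hlt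
          _ = (1/16) * ((m:ℝ) ^ (1/r) * (m:ℝ) ^ (-(1/p'))) := by
              rw [← Real.rpow_add hmR]; ring_nf
        have hpos : (0:ℝ) < (m:ℝ) ^ (1/r) := Real.rpow_pos_of_pos hmR _
        rw [hδdef]
        nlinarith [Real.rpow_pos_of_pos hmR (-(1/p'))]
      exact sl_sum_natAbs_lt hm hδ hq1 hε.le _ hsum_le hεb
  -- choose covering centers
  have hmem : ∀ v, ∃ y ∈ S, T (xv v) ∈ closedBall y ε := by
    intro v
    have := hcov ⟨xv v, mem_closedBall_zero_iff.mpr (hxnorm v), rfl⟩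
    simpa using this
  choose ψ hψS hψd using hmem
  -- pigeonhole
  set NB : ℕ := 2^m * 2^(m+(m-1)) with hNB
  have hcard_lt : S.card * NB < (Finset.univ : Finset (Fin m → Fin 17)).card := by
    rw [Finset.card_univ]
    have hcu : Fintype.card (Fin m → Fin 17) = 17 ^ m := by simp
    rw [hcu]
    calc S.card * NB ≤ 2^(m-1) * (2^m * 2^(m+(m-1))) := by
          apply Nat.mul_le_mul_right
          exact le_trans hS (Nat.pow_le_pow_right (by norm_num) (by omega))
    _ = 2^((m-1)+(m+(m+(m-1)))) := by rw [← pow_add, ← pow_add]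
    _ < 2^(4*m) := Nat.pow_lt_pow_right (by norm_num) (by omega)
    _ = 16^m := by rw [pow_mul]; norm_num
    _ ≤ 17^m := Nat.pow_le_pow_left (by norm_num) m
  obtain ⟨y, hyS, hfib⟩ := Finset.exists_lt_card_fiber_of_mul_lt_card_of_maps_to
    (fun v _ => hψS v) hcard_lt
  have hfib_ne : (Finset.univ.filter fun v => ψ v = y).Nonempty := by
    rw [← Finset.card_pos]; omega
  obtain ⟨v₀, hv₀⟩ := hfib_ne
  have hv₀y : ψ v₀ = y := (Finset.mem_filter.mp hv₀).2
  have hfiber_le : (Finset.univ.filter fun v => ψ v = y).card ≤ NB := by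
    apply sl_encode_card hm _ v₀
    intro v hv
    apply hclaim
    have hvy : ψ v = y := (Finset.mem_filter.mp hv).2
    have d1 : dist (T (xv v)) y ≤ ε := by rw [← hvy]; exact mem_closedBall.mp (hψd v)
    have d2 : dist (T (xv v₀)) y ≤ ε := by rw [← hv₀y]; exact mem_closedBall.mp (hψd v₀)
    calc dist (T (xv v)) (T (xv v₀)) ≤ dist (T (xv v)) y + dist y (T (xv v₀)) := dist_triangle _ _ _
    _ = dist (T (xv v)) y + dist (T (xv v₀)) y := by rw [dist_comm y]
    _ ≤ 2*ε := by linarith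
  omega

set_option maxHeartbeats 1000000 in
lemma sl_sparse (p q : ℝ≥0∞) [Fact (1 ≤ p)] [Fact (1 ≤ q)] (hpq : p < q) {m n : ℕ}
    (hn : 1 ≤ n) (hnm : n ≤ m) (hlog : Real.logb 2 m ≤ (n:ℝ)) (hm65 : 2^65 * n ≤ m)
    (T : PiLp p (fun _ : Fin m => ℝ) →L[ℝ] PiLp q (fun _ : Fin m => ℝ))
    (hT : ∀ x i, T x i = x i) {ε : ℝ} (hε : 0 < ε)
    (S : Finset (PiLp q fun _ : Fin m => ℝ)) (hS : S.card ≤ 2^(n-1))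
    (hcov : T '' closedBall 0 1 ⊆ ⋃ y ∈ S, closedBall y ε) :
    (1/18) * (Real.logb 2 ((m : ℝ)/n + 1) / n) ^ (1/p.toReal - 1/q.toReal) ≤ ε := by
  classical
  have hp_top : p ≠ ∞ := hpq.ne_top
  have hp1 : (1:ℝ) ≤ p.toReal := by
    rw [← ENNReal.toReal_one]; exact ENNReal.toReal_mono hp_top (Fact.out : 1 ≤ p)
  have hp0 : (0:ℝ) < p.toReal := lt_of_lt_of_le one_pos hp1
  set p' : ℝ := p.toReal with hp'
  have hnR : (0:ℝ) < (n:ℝ) := by exact_mod_cast hn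
  have hmR : (0:ℝ) < (m:ℝ) := by
    have : (0:ℕ) < m := by omega
    exact_mod_cast this
  set L : ℝ := Real.logb 2 ((m : ℝ)/n + 1) with hLdef
  have hmn65 : (2:ℝ)^(65:ℕ) * n ≤ m := by exact_mod_cast hm65
  have hdiv65 : (2:ℝ)^(65:ℕ) ≤ (m:ℝ)/n := by
    rw [le_div_iff₀ hnR]; exact hmn65
  have hL65 : (65:ℝ) ≤ L := by
    have h1 : Real.logb 2 ((2:ℝ)^(65:ℕ)) ≤ L := by
      apply Real.logb_le_logb_of_le (by norm_num) (by positivity)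
      nlinarith [hdiv65]
    calc (65:ℝ) = Real.logb 2 ((2:ℝ)^(65:ℕ)) := by
          rw [← Real.rpow_natCast 2 65, Real.logb_rpow (by norm_num) (by norm_num)]; norm_num
    _ ≤ L := h1
  have hL0 : 0 < L := by linarith
  -- n ≥ 65
  have hn65 : 65 ≤ n := by
    have h1 : (65:ℝ) ≤ Real.logb 2 m := by
      have : Real.logb 2 ((2:ℝ)^(65:ℕ)) ≤ Real.logb 2 m := by
        apply Real.logb_le_logb_of_le (by norm_num) (by positivity)
        nlinarith [hmn65, (by exact_mod_cast hn : (1:ℝ) ≤ (n:ℝ)),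
          (by positivity : (0:ℝ) < (2:ℝ)^(65:ℕ))]
      calc (65:ℝ) = Real.logb 2 ((2:ℝ)^(65:ℕ)) := by
            rw [← Real.rpow_natCast 2 65, Real.logb_rpow (by norm_num) (by norm_num)]; norm_num
      _ ≤ Real.logb 2 m := this
    have h2 : (65:ℝ) ≤ (n:ℝ) := le_trans h1 hlog
    exact_mod_cast h2
  -- L ≤ n
  have hm2 : (2:ℝ) ≤ (m:ℝ) := by
    have : 2 ≤ m := by omega
    exact_mod_cast this
  have hLn : L ≤ (n:ℝ) := by
    have h1 : (m:ℝ)/n + 1 ≤ (m:ℝ) := by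
      have h2 : (m:ℝ)/n ≤ (m:ℝ)/2 := by
        apply div_le_div_of_nonneg_left hmR.le (by norm_num)
        exact_mod_cast (by omega : 2 ≤ n)
      linarith
    calc L ≤ Real.logb 2 m := Real.logb_le_logb_of_le (by norm_num) (by positivity) h1
    _ ≤ (n:ℝ) := hlog
  set j : ℕ := ⌊L⌋₊ with hjdef
  have hj65 : 65 ≤ j := Nat.le_floor (by exact_mod_cast hL65)
  have hjL : (j:ℝ) ≤ L := Nat.floor_le hL0.le
  have hjn : j ≤ n := by
    have : (j:ℝ) ≤ (n:ℝ) := le_trans hjL hLn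
    exact_mod_cast this
  set d : ℕ := n / j with hddef
  have hd1 : 1 ≤ d := (Nat.one_le_div_iff (by omega)).mpr hjn
  set k : ℕ := 4*d + 4 with hkdef
  set h : ℕ := 2*d + 2 with hhdef
  have hkh : k = 2*h := by omega
  -- k ≤ n
  have hdn65 : d ≤ n / 65 := by
    apply Nat.div_le_div_left (by omega) (by norm_num)
  have hkn : k ≤ n := by
    have h2 := Nat.div_mul_le_self n 65
    omega
  have hkm : k ≤ m := le_trans hkn hnm
  -- m ≥ 2^(j-1) * n
  have hmjn : 2^(j-1) * n ≤ m := by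
    have h1 : (2:ℝ)^((j:ℕ):ℝ) ≤ (m:ℝ)/n + 1 := by
      calc (2:ℝ)^((j:ℕ):ℝ) ≤ (2:ℝ)^L := Real.rpow_le_rpow_of_exponent_le (by norm_num) hjL
      _ = (m:ℝ)/n + 1 := Real.rpow_logb (by norm_num) (by norm_num) (by positivity)
    have h2 : (2:ℝ)^(j:ℕ) ≤ (m:ℝ)/n + 1 := by rwa [Real.rpow_natCast] at h1
    have h3 : (1:ℝ) ≤ (m:ℝ)/n := by
      rw [le_div_iff₀ hnR]; exact_mod_cast (by omega : 1 * n ≤ m)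
    have h4 : (2:ℝ)^(j-1:ℕ) ≤ (m:ℝ)/n := by
      have h5 : (2:ℝ)^(j:ℕ) = 2 * (2:ℝ)^(j-1:ℕ) := by
        rw [← pow_succ']; congr 1; omega
      nlinarith [h1]
    have h6 : (2:ℝ)^(j-1:ℕ) * n ≤ m := by
      rw [← le_div_iff₀ hnR]; linarith
    exact_mod_cast h6
  -- the step hypothesis for the choose ratio
  set w : ℕ := j - 5 with hwdef
  have hstep : ∀ i, h ≤ i → i < k → 2^w * (i+1) ≤ m - i := by
    intro i hhi hik
    have h1 : 2^w * (i+1) ≤ 2^w * k := Nat.mul_le_mul_left _ (by omega)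
    have h2 : 2^w * k + k ≤ 2^(j-1) * n := by
      have e1 : 2^w * k ≤ 2^w * n := Nat.mul_le_mul_left _ hkn
      have e2 : 2^w * n + n = (2^w + 1) * n := by ring
      have e3 : (2^w + 1) ≤ 2^(j-1) := by
        have : (2:ℕ)^w + 1 ≤ 2^w + 2^w := by
          have : 1 ≤ 2^w := Nat.one_le_two_pow
          omega
        calc (2:ℕ)^w + 1 ≤ 2^w + 2^w := this
        _ = 2^(w+1) := by ring
        _ ≤ 2^(j-1) := Nat.pow_le_pow_right (by norm_num) (by omega)
      have e4 : (2^w + 1) * n ≤ 2^(j-1) * n := Nat.mul_le_mul_right _ e3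
      omega
    have hmk2 : 2^w * k + k ≤ m := le_trans h2 hmjn
    have h5 : 2^w * (i+1) + i ≤ 2^w * k + k := Nat.add_le_add h1 hik.le
    exact Nat.le_sub_of_add_le (le_trans h5 hmk2)
  -- the counting inequality
  have hcount : 2^(n-1) * (2^k * ((h+1) * m.choose h)) < m.choose k := by
    have hcr := sl_choose_ratio m w (h := h) (k := k) (by omega) hstep
    rw [show k - h = h by omega] at hcr
    have hwh : n + k + h + 1 ≤ w * h := by
      have j8 : 8 ≤ j := by omega
      have base : j * d + j ≤ (j-8) * (2*d+2) := by
        have e1 : (j-8) * (2*d+2) = (2*(j-8)) * (d+1) := by ring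
        have e2 : j ≤ 2*(j-8) := by omega
        have e3 : j * (d+1) ≤ (2*(j-8)) * (d+1) := Nat.mul_le_mul_right _ e2
        calc j * d + j = j * (d+1) := by ring
        _ ≤ (2*(j-8)) * (d+1) := e3
        _ = (j-8) * (2*d+2) := e1.symm
      have hnlt : n < j * d + j := by
        have h1 : j * d + n % j = n := by rw [hddef]; exact Nat.div_add_mod n j
        have hmod : n % j < j := Nat.mod_lt _ (by omega)
        calc n = j*d + n % j := h1.symm
        _ < j*d + j := Nat.add_lt_add_left hmod _
      have hsplit : w * h = (j-8) * (2*d+2) + 3 * (2*d+2) := by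
        have : w = (j-8) + 3 := by omega
        rw [this, Nat.add_mul]
      have : n + 1 + 6*d + 6 ≤ w * h := by
        rw [hsplit]
        have : n + 1 ≤ (j-8) * (2*d+2) := by omega
        omega
      omega
    have hchpos : 0 < m.choose h := Nat.choose_pos (by omega)
    calc 2^(n-1) * (2^k * ((h+1) * m.choose h))
        ≤ 2^(n-1) * (2^k * (2^h * m.choose h)) := by
          apply Nat.mul_le_mul_left
          apply Nat.mul_le_mul_left
          apply Nat.mul_le_mul_right
          exact Nat.lt_two_pow_self (n := h)
    _ = 2^((n-1) + k + h) * m.choose h := by rw [pow_add, pow_add]; ring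
    _ < 2^(w * h) * m.choose h :=
        (Nat.mul_lt_mul_right hchpos).mpr (Nat.pow_lt_pow_right (by norm_num) (by omega))
    _ ≤ m.choose k := hcr
  -- the point family
  set β : ℝ := (k:ℝ) ^ (-(1/p')) with hβdef
  have hk0 : 0 < k := by omega
  have hkR : (0:ℝ) < (k:ℝ) := by exact_mod_cast hk0
  have hβ : 0 < β := Real.rpow_pos_of_pos hkR _
  set xA : Finset (Fin m) → PiLp p (fun _ : Fin m => ℝ) :=
    fun A => (WithLp.equiv p _).symm (fun i => if i ∈ A then β else 0) with hxAdef
  have hxA_apply : ∀ A i, xA A i = if i ∈ A then β else 0 := fun A i => rfl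
  have hβp : β ^ p' = (k:ℝ)⁻¹ := by
    rw [hβdef, ← Real.rpow_mul hkR.le, show (-(1/p')) * p' = -1 by field_simp,
      Real.rpow_neg_one]
  have hxAnorm : ∀ A : Finset (Fin m), A.card = k → ‖xA A‖ ≤ 1 := by
    intro A hA
    rw [PiLp.norm_eq_sum hp0]
    have hsum : (∑ i, ‖xA A i‖ ^ p') = 1 := by
      have hterm : ∀ i, ‖xA A i‖ ^ p' = if i ∈ A then β ^ p' else 0 := by
        intro i
        rw [hxA_apply]
        by_cases hi : i ∈ A
        · simp [hi, Real.norm_eq_abs, abs_of_pos hβ]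
        · simp [hi, Real.zero_rpow hp0.ne']
      rw [Finset.sum_congr rfl (fun i _ => hterm i), Finset.sum_ite_mem, Finset.univ_inter,
        Finset.sum_const, hA, nsmul_eq_mul, hβp, mul_inv_cancel₀ hkR.ne']
    rw [hsum, Real.one_rpow]
  -- separation
  have hsep : ∀ A B : Finset (Fin m), A.card = k → B.card = k → h + 1 ≤ (B \ A).card →
      2 * ((1/2) * (k:ℝ) ^ (1/q.toReal - 1/p')) ≤ dist (T (xA A)) (T (xA B)) := by
    intro A B hA hB hBA
    rw [dist_eq_norm]
    set g : PiLp q (fun _ : Fin m => ℝ) := T (xA A) - T (xA B) with hgdef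
    have hcoord : ∀ i, ‖g i‖ = if i ∈ (A \ B) ∪ (B \ A) then β else 0 := by
      intro i
      have h1 : g i = (if i ∈ A then β else 0) - (if i ∈ B then β else 0) := by
        have : g i = T (xA A) i - T (xA B) i := rfl
        rw [this, hT, hT, hxA_apply, hxA_apply]
      rw [h1]
      by_cases hiA : i ∈ A <;> by_cases hiB : i ∈ B <;>
        simp [hiA, hiB, Real.norm_eq_abs, abs_of_pos hβ, abs_of_nonpos, hβ.le]
    have hcardAB : (A \ B).card = (B \ A).card := by
      have e1 := Finset.card_sdiff_add_card_inter A B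
      have e2 := Finset.card_sdiff_add_card_inter B A
      rw [Finset.inter_comm] at e2
      omega
    have hcardU : k + 2 ≤ ((A \ B) ∪ (B \ A)).card := by
      rw [Finset.card_union_of_disjoint disjoint_sdiff_sdiff]
      omega
    by_cases hq_top : q = ∞
    · -- sup norm
      obtain ⟨i, hi⟩ : (B \ A).Nonempty := Finset.card_pos.mp (by omega)
      have h2 : β ≤ ‖g‖ := by
        subst hq_top
        rw [PiLp.norm_eq_ciSup]
        refine le_trans ?_ (le_ciSup (f := fun i => ‖g i‖)
          (Finite.bddAbove_range _) i)
        rw [hcoord]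
        simp [Finset.mem_union, hi]
      have h0 : 1/q.toReal = 0 := by rw [hq_top]; simp
      rw [h0]
      calc 2 * ((1/2) * (k:ℝ) ^ (0 - 1/p')) = (k:ℝ) ^ (-(1/p')) := by ring_nf
      _ ≤ ‖g‖ := by rw [← hβdef]; exact h2
    · have hq1 : (1:ℝ) ≤ q.toReal := by
        rw [← ENNReal.toReal_one]; exact ENNReal.toReal_mono hq_top (Fact.out : 1 ≤ q)
      have hq0 : (0:ℝ) < q.toReal := lt_of_lt_of_le one_pos hq1
      set r : ℝ := q.toReal with hrdef
      have hnorm_eq : ‖g‖ = (∑ i, ‖g i‖ ^ r) ^ (1/r) :=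
        PiLp.norm_eq_sum hq0 _
      have hsum_eq : (∑ i, ‖g i‖ ^ r)
          = (((A \ B) ∪ (B \ A)).card : ℝ) * β ^ r := by
        have hterm : ∀ i, ‖g i‖ ^ r
            = if i ∈ (A \ B) ∪ (B \ A) then β ^ r else 0 := by
          intro i
          rw [hcoord]
          by_cases hi : i ∈ (A \ B) ∪ (B \ A)
          · simp [hi]
          · simp [hi, Real.zero_rpow hq0.ne']
        rw [Finset.sum_congr rfl (fun i _ => hterm i), Finset.sum_ite_mem, Finset.univ_inter,
          Finset.sum_const, nsmul_eq_mul]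
      have hβr : (0:ℝ) < β ^ r := Real.rpow_pos_of_pos hβ _
      have hchain : (k:ℝ) ^ (1/r) * β ≤ ‖g‖ := by
        have h1 : (k:ℝ) ^ (1/r) * β = ((k:ℝ) * β ^ r) ^ (1/r) := by
          rw [Real.mul_rpow hkR.le hβr.le, one_div, Real.rpow_rpow_inv hβ.le hq0.ne']
        have h2 : ((k:ℝ) * β ^ r) ^ (1/r) ≤ ((((A \ B) ∪ (B \ A)).card : ℝ) * β ^ r) ^ (1/r) := by
          apply Real.rpow_le_rpow (by positivity) ?_ (by positivity)
          have : (k:ℝ) ≤ (((A \ B) ∪ (B \ A)).card : ℝ) := by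
            exact_mod_cast (by omega : k ≤ ((A \ B) ∪ (B \ A)).card)
          nlinarith
        rw [h1, hnorm_eq, hsum_eq]
        exact h2
      have hfin : 2 * ((1/2) * (k:ℝ) ^ (1/r - 1/p')) = (k:ℝ) ^ (1/r) * β := by
        rw [hβdef, ← Real.rpow_add hkR]; ring_nf
      rw [hfin]
      exact hchain
  -- nonemptiness of S
  have hF_ne : (Finset.powersetCard k (Finset.univ : Finset (Fin m))).Nonempty := by
    rw [← Finset.card_pos, Finset.card_powersetCard, Finset.card_univ, Fintype.card_fin]
    exact Nat.choose_pos hkm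
  obtain ⟨A₁, hA₁⟩ := hF_ne
  have hA₁k : A₁.card = k := (Finset.mem_powersetCard.mp hA₁).2
  have hS_ne : S.Nonempty := by
    have := hcov ⟨xA A₁, mem_closedBall_zero_iff.mpr (hxAnorm A₁ hA₁k), rfl⟩
    simp only [Set.mem_iUnion] at this
    obtain ⟨y, hy, -⟩ := this
    exact ⟨y, hy⟩
  -- choice of covering centers
  have hchoice : ∀ A : Finset (Fin m), ∃ y, y ∈ S ∧
      (A.card = k → T (xA A) ∈ closedBall y ε) := by
    intro A
    by_cases hA : A.card = k
    · have := hcov ⟨xA A, mem_closedBall_zero_iff.mpr (hxAnorm A hA), rfl⟩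
      simp only [Set.mem_iUnion] at this
      obtain ⟨y, hy, hyd⟩ := this
      exact ⟨y, hy, fun _ => hyd⟩
    · obtain ⟨y, hy⟩ := hS_ne
      exact ⟨y, hy, fun hc => absurd hc hA⟩
  choose ψ hψS hψd using hchoice
  -- pigeonhole
  set F : Finset (Finset (Fin m)) := Finset.powersetCard k Finset.univ with hFdef
  set M : ℕ := 2^k * ((h+1) * m.choose h) with hMdef
  have hFcard : F.card = m.choose k := by
    rw [hFdef, Finset.card_powersetCard, Finset.card_univ, Fintype.card_fin]
  have hlt : S.card * M < F.card := by
    rw [hFcard]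
    calc S.card * M ≤ 2^(n-1) * M := Nat.mul_le_mul_right _ hS
    _ < m.choose k := hcount
  obtain ⟨y, hyS, hfib⟩ := Finset.exists_lt_card_fiber_of_mul_lt_card_of_maps_to
    (fun A _ => hψS A) hlt
  have hfib_ne : (F.filter fun A => ψ A = y).Nonempty := by
    rw [← Finset.card_pos]; omega
  obtain ⟨A₀, hA₀⟩ := hfib_ne
  have hA₀F : A₀ ∈ F := (Finset.mem_filter.mp hA₀).1
  have hA₀k : A₀.card = k := (Finset.mem_powersetCard.mp hA₀F).2
  have hA₀y : ψ A₀ = y := (Finset.mem_filter.mp hA₀).2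
  -- suppose ε is small, derive contradiction
  by_contra hεlt
  push_neg at hεlt
  have hεsmall : ε < (1/2) * (k:ℝ) ^ (1/q.toReal - 1/p') := by
    -- (1/18) (L/n)^α ≤ (1/2) k^{-α}
    have hα0 : 0 ≤ 1/p' - 1/q.toReal := by
      by_cases hq_top : q = ∞
      · rw [hq_top]; simp; positivity
      · have hpq' : p.toReal ≤ q.toReal := ENNReal.toReal_mono hq_top hpq.le
        have hq0 : (0:ℝ) < q.toReal := lt_of_lt_of_le hp0 hpq'
        have : 1/q.toReal ≤ 1/p' := by
          apply one_div_le_one_div_of_le hp0 hpq'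
        linarith
    have hα1 : 1/p' - 1/q.toReal ≤ 1 := by
      have h1 : 1/p' ≤ 1 := by
        rw [div_le_one hp0]; exact hp1
      have h2 : 0 ≤ 1/q.toReal := by positivity
      linarith
    set α : ℝ := 1/p' - 1/q.toReal with hαdef
    -- k ≤ 9 n / L
    have hk9 : (k:ℝ) ≤ 9 * n / L := by
      have hd_le : ((d:ℕ):ℝ) ≤ (n:ℝ)/(j:ℝ) := Nat.cast_div_le
      have hjL1 : L - 1 < (j:ℝ) := by
        have := Nat.lt_floor_add_one L
        push_cast at this ⊢
        linarith
      have hL64 : (64/65) * L ≤ L - 1 := by nlinarith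
      have hjpos : (0:ℝ) < (j:ℝ) := by exact_mod_cast (by omega : 0 < j)
      have h4nj : (n:ℝ)/(j:ℝ) ≤ (n:ℝ)/((64/65)*L) := by
        apply div_le_div_of_nonneg_left hnR.le (by nlinarith) (by linarith)
      have heq1 : (n:ℝ)/((64/65)*L) = (65/64)*((n:ℝ)/L) := by
        field_simp
      have h4 : (4:ℝ) ≤ 4 * ((n:ℝ)/L) := by
        have : (1:ℝ) ≤ (n:ℝ)/L := by
          rw [le_div_iff₀ hL0]; linarith
        linarith
      have hkR' : (k:ℝ) = 4*(d:ℝ) + 4 := by rw [hkdef]; push_cast; ring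
      have hnL0 : (0:ℝ) ≤ (n:ℝ)/L := by positivity
      calc (k:ℝ) = 4*(d:ℝ) + 4 := hkR'
      _ ≤ 4*((65/64)*((n:ℝ)/L)) + 4*((n:ℝ)/L) := by
          have h5 := le_trans hd_le h4nj
          rw [heq1] at h5
          nlinarith
      _ = (65/16 + 4) * ((n:ℝ)/L) := by ring
      _ ≤ 9 * ((n:ℝ)/L) := by nlinarith
      _ = 9 * n / L := by rw [mul_div_assoc]
    -- convert: (1/18)(L/n)^α ≤ (1/2) k^{-α}
    have hkL9 : (k:ℝ) * L ≤ 9 * n := by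
      rw [← le_div_iff₀ hL0]; exact hk9
    have hbase : L/(9*n) ≤ 1/(k:ℝ) := by
      rw [div_le_div_iff₀ (by positivity) hkR]
      linarith
    have he1 : L/(n:ℝ) = 9 * (L/(9*n)) := by
      field_simp
    have he2 : (L/(n:ℝ)) ^ α = (9:ℝ)^α * (L/(9*n))^α := by
      rw [he1, Real.mul_rpow (by norm_num) (by positivity)]
    have he3 : (9:ℝ)^α ≤ 9 := by
      calc (9:ℝ)^α ≤ (9:ℝ)^(1:ℝ) := Real.rpow_le_rpow_of_exponent_le (by norm_num) hα1
      _ = 9 := Real.rpow_one 9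
    have he4 : (L/(9*n))^α ≤ (1/(k:ℝ))^α := Real.rpow_le_rpow (by positivity) hbase hα0
    have he5 : (1/(k:ℝ))^α = (k:ℝ) ^ (1/q.toReal - 1/p') := by
      rw [show 1/q.toReal - 1/p' = -α by rw [hαdef]; ring, Real.rpow_neg hkR.le,
        one_div, Real.inv_rpow hkR.le]
    have hch : (1/18) * (L/(n:ℝ)) ^ α ≤ (1/2) * (k:ℝ) ^ (1/q.toReal - 1/p') := by
      have h9 : (9:ℝ)^α * (L/(9*n))^α ≤ 9 * (1/(k:ℝ))^α := by
        apply mul_le_mul he3 he4 (by positivity) (by norm_num)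
      calc (1/18) * (L/(n:ℝ)) ^ α = (1/18) * ((9:ℝ)^α * (L/(9*n))^α) := by rw [he2]
      _ ≤ (1/18) * (9 * (1/(k:ℝ))^α) := by linarith [h9]
      _ = (1/2) * (1/(k:ℝ))^α := by ring
      _ = (1/2) * (k:ℝ) ^ (1/q.toReal - 1/p') := by rw [he5]
    calc ε < (1/18) * (L/(n:ℝ)) ^ α := hεlt
    _ ≤ (1/2) * (k:ℝ) ^ (1/q.toReal - 1/p') := hch
  -- now pigeonhole contradiction
  have hinj : ∀ B ∈ F.filter (fun A => ψ A = y), (B \ A₀).card ≤ h := by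
    intro B hB
    have hBF : B ∈ F := (Finset.mem_filter.mp hB).1
    have hBk : B.card = k := (Finset.mem_powersetCard.mp hBF).2
    have hBy : ψ B = y := (Finset.mem_filter.mp hB).2
    by_contra hc
    push_neg at hc
    have hd1' := hsep A₀ B hA₀k hBk (by omega)
    have d1 : dist (T (xA B)) y ≤ ε := by rw [← hBy]; exact mem_closedBall.mp (hψd B hBk)
    have d2 : dist (T (xA A₀)) y ≤ ε := by rw [← hA₀y]; exact mem_closedBall.mp (hψd A₀ hA₀k)
    have : dist (T (xA A₀)) (T (xA B)) ≤ 2*ε := by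
      calc dist (T (xA A₀)) (T (xA B)) ≤ dist (T (xA A₀)) y + dist y (T (xA B)) :=
            dist_triangle _ _ _
      _ = dist (T (xA A₀)) y + dist (T (xA B)) y := by rw [dist_comm y]
      _ ≤ 2*ε := by linarith
    linarith [hd1', hεsmall, this]
  have hfib_le : (F.filter fun A => ψ A = y).card ≤ M := by
    have hmap : ∀ B ∈ F.filter (fun A => ψ A = y),
        (B ∩ A₀, B \ A₀) ∈ A₀.powerset ×ˢ
          ((Finset.range (h+1)).biUnion fun i => Finset.powersetCard i Finset.univ) := by
      intro B hB
      rw [Finset.mem_product]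
      constructor
      · exact Finset.mem_powerset.mpr Finset.inter_subset_right
      · rw [Finset.mem_biUnion]
        exact ⟨(B \ A₀).card, Finset.mem_range.mpr (by have := hinj B hB; omega),
          Finset.mem_powersetCard.mpr ⟨Finset.subset_univ _, rfl⟩⟩
    have hinj2 : Set.InjOn (fun B => (B ∩ A₀, B \ A₀)) (F.filter fun A => ψ A = y) := by
      intro B1 h1 B2 h2 he
      simp only [Prod.mk.injEq] at he
      have e1 : (B1 ∩ A₀) ∪ (B1 \ A₀) = B1 := by
        rw [Finset.union_comm, Finset.sdiff_union_inter]
      have e2 : (B2 ∩ A₀) ∪ (B2 \ A₀) = B2 := by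
        rw [Finset.union_comm, Finset.sdiff_union_inter]
      rw [← e1, ← e2, he.1, he.2]
    have hcard := Finset.card_le_card_of_injOn _ hmap hinj2
    refine le_trans hcard ?_
    rw [Finset.card_product, Finset.card_powerset, hA₀k]
    apply Nat.mul_le_mul_left
    calc ((Finset.range (h+1)).biUnion fun i => Finset.powersetCard i Finset.univ).card
        ≤ ∑ i ∈ Finset.range (h+1), (Finset.powersetCard i (Finset.univ : Finset (Fin m))).card :=
          Finset.card_biUnion_le
    _ ≤ ∑ _i ∈ Finset.range (h+1), m.choose h := by
        apply Finset.sum_le_sum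
        intro i hi
        rw [Finset.card_powersetCard, Finset.card_univ, Fintype.card_fin]
        exact sl_choose_mono_half m (by simpa using Nat.lt_succ_iff.mp (Finset.mem_range.mp hi))
          (by omega)
    _ = (h+1) * m.choose h := by rw [Finset.sum_const, Finset.card_range, smul_eq_mul]
  omega

/-- Lower estimate for the entropy numbers of `id : ℓ_p^m → ℓ_q^m` in the regime
`log₂ m ≤ n ≤ m`. -/
theorem schuett_lower (p q : ℝ≥0∞) [Fact (1 ≤ p)] [Fact (1 ≤ q)] (hpq : p < q) :
    ∃ c : ℝ, 0 < c ∧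
      ∀ (m n : ℕ), Real.logb 2 m ≤ (n : ℝ) → n ≤ m →
        ∀ T : PiLp p (fun _ : Fin m => ℝ) →L[ℝ] PiLp q (fun _ : Fin m => ℝ),
          (∀ x i, T x i = x i) →
          c * (Real.logb 2 ((m : ℝ) / n + 1) / n) ^ (1 / p.toReal - 1 / q.toReal)
            ≤ entropyNum n T := by
  classical
  have hp_top : p ≠ ∞ := hpq.ne_top
  have hp1 : (1:ℝ) ≤ p.toReal := by
    rw [← ENNReal.toReal_one]; exact ENNReal.toReal_mono hp_top (Fact.out : 1 ≤ p)
  have hp0 : (0:ℝ) < p.toReal := lt_of_lt_of_le one_pos hp1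
  have hα_pos : 0 < 1/p.toReal - 1/q.toReal := by
    by_cases hq_top : q = ∞
    · rw [hq_top]; simp; positivity
    · have hpq' : p.toReal < q.toReal :=
        ENNReal.toReal_strict_mono hq_top hpq
      have h1 : 1/q.toReal < 1/p.toReal := by
        apply one_div_lt_one_div_of_lt hp0 hpq'
      linarith
  have hα1 : 1/p.toReal - 1/q.toReal ≤ 1 := by
    have h1 : 1/p.toReal ≤ 1 := by rw [div_le_one hp0]; exact hp1
    have h2 : 0 ≤ 1/q.toReal := by positivity
    linarith
  refine ⟨(2:ℝ)^(-(80:ℝ)), by positivity, ?_⟩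
  intro m n hlog hnm T hT
  rcases Nat.eq_zero_or_pos n with hn0 | hn
  · -- n = 0 : right-hand side is zero
    subst hn0
    have h1 : ((0:ℕ):ℝ) = 0 := by norm_num
    rw [h1, div_zero, Real.zero_rpow hα_pos.ne', mul_zero]
    apply Real.sInf_nonneg
    rintro x ⟨hx, -⟩
    exact hx.le
  · have hm : 1 ≤ m := le_trans hn hnm
    have hnR : (0:ℝ) < (n:ℝ) := by exact_mod_cast hn
    have hmR : (0:ℝ) < (m:ℝ) := by exact_mod_cast hm
    -- the admissible set is nonempty
    have hne : {ε : ℝ | 0 < ε ∧ ∃ S : Finset (PiLp q fun _ : Fin m => ℝ),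
        S.card ≤ 2 ^ (n - 1) ∧ T '' closedBall 0 1 ⊆ ⋃ y ∈ S, closedBall y ε}.Nonempty := by
      refine ⟨‖T‖ + 1, by positivity, {0}, by simpa using Nat.one_le_two_pow, ?_⟩
      rintro _ ⟨x, hx, rfl⟩
      simp only [Set.mem_iUnion]
      refine ⟨0, by simp, ?_⟩
      rw [mem_closedBall, dist_zero_right]
      calc ‖T x‖ ≤ ‖T‖ * ‖x‖ := T.le_opNorm x
      _ ≤ ‖T‖ * 1 := by
          have := mem_closedBall_zero_iff.mp hx
          nlinarith [norm_nonneg T]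
      _ ≤ ‖T‖ + 1 := by nlinarith [norm_nonneg T]
    apply le_csInf hne
    rintro ε ⟨hεpos, S, hS, hcov⟩
    set L : ℝ := Real.logb 2 ((m : ℝ)/n + 1) with hLdef
    have hL1 : (1:ℝ) ≤ L := by
      have h1 : (2:ℝ) ≤ (m:ℝ)/n + 1 := by
        have : (1:ℝ) ≤ (m:ℝ)/n := by
          rw [le_div_iff₀ hnR]
          exact_mod_cast (by omega : 1 * n ≤ m)
        linarith
      calc (1:ℝ) = Real.logb 2 2 := (Real.logb_self_eq_one (by norm_num)).symm
      _ ≤ L := Real.logb_le_logb_of_le (by norm_num) (by norm_num) h1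
    have hL0 : 0 < L := by linarith
    by_cases hdense : m < 2^65 * n
    · -- dense regime
      have hd := sl_dense p q hpq hm hnm T hT hεpos S hS hcov
      -- bound L ≤ 66 and m ≤ 2^65 n
      have hmn : (m:ℝ) < (2:ℝ)^(65:ℕ) * n := by exact_mod_cast hdense
      have hL66 : L ≤ 66 := by
        have h1 : (m:ℝ)/n + 1 ≤ (2:ℝ)^(66:ℕ) := by
          have h2 : (m:ℝ)/n < (2:ℝ)^(65:ℕ) := by
            rw [div_lt_iff₀ hnR]; linarith
          have : (2:ℝ)^(65:ℕ) + 1 ≤ (2:ℝ)^(66:ℕ) := by norm_num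
          linarith
        calc L ≤ Real.logb 2 ((2:ℝ)^(66:ℕ)) :=
              Real.logb_le_logb_of_le (by norm_num) (by positivity) h1
        _ = 66 := by
            rw [← Real.rpow_natCast 2 66, Real.logb_rpow (by norm_num) (by norm_num)]
            norm_num
      set α : ℝ := 1/p.toReal - 1/q.toReal with hαdef
      have hLm : L * (m:ℝ) ≤ (2:ℝ)^(72:ℕ) * n := by
        have h1 : L * (m:ℝ) ≤ 66 * (m:ℝ) := by nlinarith
        have h2 : (66:ℝ) * (m:ℝ) ≤ 66 * ((2:ℝ)^(65:ℕ) * n) := by nlinarith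
        have h3 : (66:ℝ) * ((2:ℝ)^(65:ℕ) * n) ≤ (2:ℝ)^(72:ℕ) * n := by
          have : (66:ℝ) * (2:ℝ)^(65:ℕ) ≤ (2:ℝ)^(72:ℕ) := by norm_num
          nlinarith
        linarith
      have hbase : L/(n:ℝ) ≤ (2:ℝ)^(72:ℕ) / m := by
        rw [div_le_div_iff₀ hnR hmR]
        linarith
      have he2 : (L/(n:ℝ))^α ≤ ((2:ℝ)^(72:ℕ))^α * (1/(m:ℝ))^α := by
        have h1 : ((2:ℝ)^(72:ℕ) / m) = (2:ℝ)^(72:ℕ) * (1/(m:ℝ)) := by ring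
        calc (L/(n:ℝ))^α ≤ ((2:ℝ)^(72:ℕ)/m)^α :=
              Real.rpow_le_rpow (by positivity) hbase hα_pos.le
        _ = ((2:ℝ)^(72:ℕ))^α * (1/(m:ℝ))^α := by
            rw [h1, Real.mul_rpow (by positivity) (by positivity)]
      have he3 : ((2:ℝ)^(72:ℕ))^α ≤ (2:ℝ)^(72:ℕ) := by
        calc ((2:ℝ)^(72:ℕ))^α ≤ ((2:ℝ)^(72:ℕ))^(1:ℝ) :=
              Real.rpow_le_rpow_of_exponent_le (by norm_num) hα1
        _ = (2:ℝ)^(72:ℕ) := Real.rpow_one _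
      have he5 : (1/(m:ℝ))^α = (m:ℝ) ^ (1/q.toReal - 1/p.toReal) := by
        rw [show 1/q.toReal - 1/p.toReal = -α by rw [hαdef]; ring, Real.rpow_neg hmR.le,
          one_div, Real.inv_rpow hmR.le]
      have hm0 : 0 < (1/(m:ℝ))^α := Real.rpow_pos_of_pos (by positivity) _
      calc (2:ℝ)^(-(80:ℝ)) * (L/(n:ℝ))^α
          ≤ (2:ℝ)^(-(80:ℝ)) * ((2:ℝ)^(72:ℕ) * (1/(m:ℝ))^α) := by
            have h9 : (L/(n:ℝ))^α ≤ (2:ℝ)^(72:ℕ) * (1/(m:ℝ))^α := by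
              calc (L/(n:ℝ))^α ≤ ((2:ℝ)^(72:ℕ))^α * (1/(m:ℝ))^α := he2
              _ ≤ (2:ℝ)^(72:ℕ) * (1/(m:ℝ))^α := mul_le_mul_of_nonneg_right he3 hm0.le
            have hc0 : (0:ℝ) < (2:ℝ)^(-(80:ℝ)) := by positivity
            exact mul_le_mul_of_nonneg_left h9 hc0.le
      _ ≤ (1/16) * (1/(m:ℝ))^α := by
          have hcc : (2:ℝ)^(-(80:ℝ)) * (2:ℝ)^(72:ℕ) ≤ 1/16 := by
            have h1 : (2:ℝ)^(72:ℕ) = (2:ℝ)^((72:ℝ)) := by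
              rw [← Real.rpow_natCast 2 72]; norm_num
            rw [h1, ← Real.rpow_add (by norm_num)]
            have h2 : (-(80:ℝ)) + 72 = -8 := by norm_num
            rw [h2, Real.rpow_neg (by norm_num : (0:ℝ) ≤ 2)]
            have h3 : (2:ℝ)^(8:ℝ) = 256 := by
              rw [show (8:ℝ) = ((8:ℕ):ℝ) by norm_num, Real.rpow_natCast]; norm_num
            rw [h3]; norm_num
          rw [← mul_assoc]
          exact mul_le_mul_of_nonneg_right hcc hm0.le
      _ = (1/16) * (m:ℝ) ^ (1/q.toReal - 1/p.toReal) := by rw [he5]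
      _ ≤ ε := hd
    · -- sparse regime
      have hsp := sl_sparse p q hpq hn hnm hlog (by omega) T hT hεpos S hS hcov
      have hLn0 : (0:ℝ) ≤ (L/(n:ℝ))^(1/p.toReal - 1/q.toReal) := by positivity
      calc (2:ℝ)^(-(80:ℝ)) * (L/(n:ℝ))^(1/p.toReal - 1/q.toReal)
          ≤ (1/18) * (L/(n:ℝ))^(1/p.toReal - 1/q.toReal) := by
            apply mul_le_mul_of_nonneg_right _ hLn0
            rw [show (1:ℝ)/18 = (18:ℝ)⁻¹ by norm_num]
            rw [Real.rpow_neg (by norm_num : (0:ℝ) ≤ 2)]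
            apply inv_anti₀ (by norm_num)
            calc (18:ℝ) ≤ 2^(80:ℕ) := by norm_num
            _ = (2:ℝ)^((80:ℕ):ℝ) := (Real.rpow_natCast 2 80).symm
            _ = (2:ℝ)^(80:ℝ) := by norm_num
      _ ≤ ε := hsp
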